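/- Let p be a prime number and let (ℤ/pℤ)ˣ denote the multiplicative group of nonzero residues modulo p. Then there exist a function ρ : (ℤ/pℤ)ˣ → ℂ \ {0} and a function ψ : ℂ → (ℤ/pℤ)ˣ such that for all x₁, x₂ ∈ (ℤ/pℤ)ˣ, both ψ(log(ρ(x₁)) + log(ρ(x₂))) = x₁ · x₂ and ψ(log(ρ(x₁)) − log(ρ(x₂))) = x₁ · x₂⁻¹ hold, where log denotes the principal branch of the complex logarithm and multiplication and inversion are taken modulo p. -/
import Mathlib


/-- A single embedding `log ∘ ρ` and outer function `ψ` simultaneously give KA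
representations of multiplication mod `p` (via sums of embeddings) and of
division mod `p` (via differences of embeddings) on `(ℤ/pℤ)ˣ`. -/
theorem ka_representation_modular_mul_and_div (p : ℕ) (hp : p.Prime) :
    ∃ (ρ : (ZMod p)ˣ → ℂ) (ψ : ℂ → (ZMod p)ˣ),
      (∀ x : (ZMod p)ˣ, ρ x ≠ 0) ∧
      ∀ x₁ x₂ : (ZMod p)ˣ,
        ψ (Complex.log (ρ x₁) + Complex.log (ρ x₂)) = x₁ * x₂ ∧
        ψ (Complex.log (ρ x₁) - Complex.log (ρ x₂)) = x₁ * x₂⁻¹ := by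
  haveI : Fact p.Prime := ⟨hp⟩
  obtain ⟨g, hg⟩ := IsCyclic.exists_generator (α := (ZMod p)ˣ)
  set n : ℕ := Fintype.card (ZMod p)ˣ with hn
  have hnpos : 0 < n := Fintype.card_pos
  have horder : orderOf g = n := by
    rw [hn, ← Nat.card_eq_fintype_card]
    exact orderOf_eq_card_of_forall_mem_zpowers hg
  -- discrete log
  have hex : ∀ x : (ZMod p)ˣ, ∃ k : ℕ, g ^ k = x := by
    intro x
    have := hg x
    rw [← mem_powers_iff_mem_zpowers] at this
    exact this
  classical
  set ind : (ZMod p)ˣ → ℕ := fun x => (hex x).choose % n with hind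
  have hindlt : ∀ x, ind x < n := fun x => Nat.mod_lt _ hnpos
  have hindpow : ∀ x, g ^ (ind x) = x := by
    intro x
    have h := (hex x).choose_spec
    show g ^ ((hex x).choose % n) = x
    calc g ^ ((hex x).choose % n) = g ^ (hex x).choose := by
          rw [← horder]; exact pow_mod_orderOf g _
      _ = x := h
  -- the embedding
  set θ : (ZMod p)ˣ → ℝ := fun x => (ind x : ℝ) / n with hθ
  have hθ0 : ∀ x, 0 ≤ θ x := fun x => by positivity
  have hθ1 : ∀ x, θ x < 1 := by
    intro x
    rw [hθ]
    simp only
    rw [div_lt_one (by exact_mod_cast hnpos)]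
    exact_mod_cast hindlt x
  refine ⟨fun x => Complex.exp ((θ x : ℂ) * Complex.I),
    fun z => g ^ (round (z.im * n) : ℤ), fun x => Complex.exp_ne_zero _, ?_⟩
  have hlog : ∀ x, Complex.log (Complex.exp ((θ x : ℂ) * Complex.I)) = (θ x : ℂ) * Complex.I := by
    intro x
    apply Complex.log_exp
    · simp only [Complex.mul_I_im, Complex.ofReal_re]
      linarith [hθ0 x, Real.pi_gt_three]
    · simp only [Complex.mul_I_im, Complex.ofReal_re]
      linarith [hθ1 x, Real.pi_gt_three]
  intro x₁ x₂
  have him_add : ((θ x₁ : ℂ) * Complex.I + (θ x₂ : ℂ) * Complex.I).im = θ x₁ + θ x₂ := by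
    simp
  have him_sub : ((θ x₁ : ℂ) * Complex.I - (θ x₂ : ℂ) * Complex.I).im = θ x₁ - θ x₂ := by
    simp
  have hnR : (n : ℝ) ≠ 0 := by exact_mod_cast hnpos.ne'
  have hmul : ∀ x, θ x * n = (ind x : ℝ) := by
    intro x; rw [hθ]; field_simp
  constructor
  · simp only [hlog, him_add]
    rw [ add_mul, hmul, hmul]
    have : ((ind x₁ : ℝ) + (ind x₂ : ℝ)) = (((ind x₁ : ℤ) + (ind x₂ : ℤ) : ℤ) : ℝ) := by
      push_cast; ring
    rw [this, round_intCast, zpow_add, zpow_natCast, zpow_natCast, hindpow, hindpow]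
  · simp only [hlog, him_sub]
    rw [ sub_mul, hmul, hmul]
    have : ((ind x₁ : ℝ) - (ind x₂ : ℝ)) = (((ind x₁ : ℤ) - (ind x₂ : ℤ) : ℤ) : ℝ) := by
      push_cast; ring
    rw [this, round_intCast, zpow_sub, zpow_natCast, zpow_natCast, hindpow, hindpow]
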